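/- Let P be a Markov transition operator on a probability space that is reversible (self-adjoint on L²(μ)) with respect to μ. Suppose f ∈ L²(μ) and there exist constants C(f) and λ > 0 such that ‖Pⁿf − μ(f)‖²_{L²(μ)} ≤ C(f)·exp(−λn) for all n ∈ ℕ. Then in fact ‖Pⁿf − μ(f)‖²_{L²(μ)} ≤ ‖f − μ(f)‖²_{L²(μ)}·exp(−λn) for all n ∈ ℕ. -/

import Mathlib

open MeasureTheory Real

/-- If `P` is a Markov operator, reversible (self-adjoint) on `L²(μ)`, preserving
constants, and `‖Pⁿ f - μ(f)‖² ≤ C(f) exp(-λ n)` for all `n`, then in fact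
`‖Pⁿ f - μ(f)‖² ≤ ‖f - μ(f)‖² exp(-λ n)` for all `n`. -/
theorem stmt_0 {X : Type*} [MeasurableSpace X] {μ : Measure X} [IsProbabilityMeasure μ]
    (P : Lp ℝ 2 μ →L[ℝ] Lp ℝ 2 μ)
    (hsa : ∀ f g : Lp ℝ 2 μ, inner ℝ (P f) g = (inner ℝ f (P g) : ℝ))
    (hconst : ∀ c : ℝ, P ((memLp_const c).toLp (fun _ => c)) =
      (memLp_const c).toLp (fun _ => c))
    (f : Lp ℝ 2 μ) (C lam : ℝ) (hlam : 0 < lam)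
    (hdecay : ∀ n : ℕ,
      ‖(P ^ n) f - (memLp_const (∫ x, f x ∂μ)).toLp (fun _ => ∫ x, f x ∂μ)‖ ^ 2
        ≤ C * exp (-lam * n)) :
    ∀ n : ℕ,
      ‖(P ^ n) f - (memLp_const (∫ x, f x ∂μ)).toLp (fun _ => ∫ x, f x ∂μ)‖ ^ 2
        ≤ ‖f - (memLp_const (∫ x, f x ∂μ)).toLp (fun _ => ∫ x, f x ∂μ)‖ ^ 2
          * exp (-lam * n) := by
  intro N
  set c : ℝ := ∫ x, f x ∂μ with hc
  set e : Lp ℝ 2 μ := (memLp_const c).toLp (fun _ => c) with he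
  have hPe : ∀ n : ℕ, (P ^ n) e = e := by
    intro n
    induction n with
    | zero => simp
    | succ n ih => rw [pow_succ, ContinuousLinearMap.mul_apply, hconst c, ih]
  set g : Lp ℝ 2 μ := f - e with hg
  have hPg : ∀ n : ℕ, (P ^ n) f - e = (P ^ n) g := by
    intro n; rw [hg, map_sub, hPe]
  set a : ℕ → ℝ := fun n => ‖(P ^ n) g‖ ^ 2 with ha
  have hanonneg : ∀ n, 0 ≤ a n := fun n => sq_nonneg _
  have ha0 : a 0 = ‖g‖ ^ 2 := by simp [ha]
  have hdecay' : ∀ n, a n ≤ C * exp (-lam * n) := by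
    intro n
    have := hdecay n
    rw [hPg n] at this
    exact this
  have hsan : ∀ n : ℕ, ∀ u v : Lp ℝ 2 μ,
      (inner ℝ ((P ^ n) u) v : ℝ) = inner ℝ u ((P ^ n) v) := by
    intro n
    induction n with
    | zero => simp
    | succ n ih =>
      intro u v
      calc (inner ℝ ((P ^ (n+1)) u) v : ℝ)
          = inner ℝ ((P ^ n) (P u)) v := by rw [pow_succ, ContinuousLinearMap.mul_apply]
        _ = inner ℝ (P u) ((P ^ n) v) := ih _ _
        _ = inner ℝ u (P ((P ^ n) v)) := hsa _ _
        _ = inner ℝ u ((P ^ (n+1)) v) := by rw [pow_succ', ContinuousLinearMap.mul_apply]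
  have hdouble : ∀ n, a n ^ 2 ≤ a 0 * a (2 * n) := by
    intro n
    have h1 : (inner ℝ ((P ^ (2 * n)) g) g : ℝ) = a n := by
      rw [two_mul, pow_add, ContinuousLinearMap.mul_apply, hsan n]
      exact real_inner_self_eq_norm_sq _
    have h2 : a n ≤ ‖(P ^ (2 * n)) g‖ * ‖g‖ := by
      rw [← h1]; exact real_inner_le_norm _ _
    have h3 := pow_le_pow_left₀ (hanonneg n) h2 2
    calc a n ^ 2 ≤ (‖(P ^ (2 * n)) g‖ * ‖g‖) ^ 2 := h3
      _ = a 0 * a (2 * n) := by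
          simp only [ha, mul_pow, pow_zero, ContinuousLinearMap.one_apply]
          ring
  have hkey : ∀ k : ℕ, a N ^ (2 ^ k) ≤ a 0 ^ (2 ^ k - 1) * a (2 ^ k * N) := by
    intro k
    induction k with
    | zero => simpa using le_refl (a N)
    | succ k ih =>
      have h2k : 1 ≤ 2 ^ k := Nat.one_le_two_pow
      have h1 : a N ^ (2 ^ (k+1)) = (a N ^ (2 ^ k)) ^ 2 := by
        rw [pow_succ, pow_mul]
      have h2 : (a N ^ (2 ^ k)) ^ 2 ≤ (a 0 ^ (2 ^ k - 1) * a (2 ^ k * N)) ^ 2 :=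
        pow_le_pow_left₀ (pow_nonneg (hanonneg N) _) ih 2
      have h3 : (a 0 ^ (2 ^ k - 1) * a (2 ^ k * N)) ^ 2
          = a 0 ^ (2 * (2 ^ k - 1)) * (a (2 ^ k * N)) ^ 2 := by
        rw [mul_pow, ← pow_mul, mul_comm (2 ^ k - 1) 2]
      have h4 : (a (2 ^ k * N)) ^ 2 ≤ a 0 * a (2 * (2 ^ k * N)) := hdouble _
      have h5 : a 0 ^ (2 * (2 ^ k - 1)) * (a (2 ^ k * N)) ^ 2
          ≤ a 0 ^ (2 * (2 ^ k - 1)) * (a 0 * a (2 * (2 ^ k * N))) :=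
        mul_le_mul_of_nonneg_left h4 (pow_nonneg (hanonneg 0) _)
      have hexp : 2 * (2 ^ k - 1) + 1 = 2 ^ (k+1) - 1 := by
        rw [pow_succ]; omega
      have hidx : 2 * (2 ^ k * N) = 2 ^ (k+1) * N := by
        rw [pow_succ]; ring
      have h6 : a 0 ^ (2 * (2 ^ k - 1)) * (a 0 * a (2 * (2 ^ k * N)))
          = a 0 ^ (2 ^ (k+1) - 1) * a (2 ^ (k+1) * N) := by
        rw [← hexp, ← hidx, pow_succ]; ring
      rw [h1, ← h6]
      exact le_trans h2 (le_trans (le_of_eq h3) h5)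
  -- reduce the goal to a statement about `a`
  rw [hPg N, ← ha0]
  show a N ≤ a 0 * exp (-lam * N)
  rcases (hanonneg 0).eq_or_lt with h0 | h0
  · -- a 0 = 0 : g = 0
    have hgnorm : ‖g‖ = 0 := by
      have : ‖g‖ ^ 2 = 0 := by rw [← ha0, ← h0]
      exact pow_eq_zero_iff (two_ne_zero) |>.mp this
    have hg0 : g = 0 := norm_eq_zero.mp hgnorm
    have haN : a N = 0 := by simp [ha, hg0]
    rw [haN, ← h0, zero_mul]
  · -- a 0 > 0
    have hCpos : 0 < C := by
      have h := hdecay' 0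
      have hE : (0:ℝ) < exp (-lam * (0:ℕ)) := exp_pos _
      nlinarith
    by_contra hcon
    push_neg at hcon
    set b : ℝ := a 0 * exp (-lam * N) with hb
    have hbpos : 0 < b := by positivity
    have hr : 1 < a N / b := (one_lt_div hbpos).mpr hcon
    obtain ⟨k, hk⟩ := pow_unbounded_of_one_lt (C / a 0) hr
    have hk2 : C / a 0 < (a N / b) ^ (2 ^ k) :=
      lt_of_lt_of_le hk (pow_le_pow_right₀ hr.le (Nat.lt_two_pow_self (n := k)).le)
    set m : ℕ := 2 ^ k with hm
    have hm1 : 1 ≤ m := Nat.one_le_two_pow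
    have h1 : a N ^ m ≤ a 0 ^ (m - 1) * (C * exp (-lam * (m * N : ℕ))) :=
      le_trans (hkey k) (mul_le_mul_of_nonneg_left (hdecay' (m * N)) (pow_nonneg (hanonneg 0) _))
    have hbm : b ^ m = a 0 ^ m * exp (-lam * (m * N : ℕ)) := by
      rw [hb, mul_pow, ← Real.exp_nat_mul]
      congr 1
      push_cast
      ring
    have e2 : a 0 ^ (m - 1) * a 0 = a 0 ^ m := by
      rw [← pow_succ]
      congr 1
      omega
    have h2 : (a N / b) ^ m ≤ C / a 0 := by
      rw [div_pow, div_le_div_iff₀ (pow_pos hbpos m) h0, hbm]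
      calc a N ^ m * a 0
          ≤ (a 0 ^ (m - 1) * (C * exp (-lam * (m * N : ℕ)))) * a 0 :=
            mul_le_mul_of_nonneg_right h1 h0.le
        _ = C * (a 0 ^ m * exp (-lam * (m * N : ℕ))) := by rw [← e2]; ring
    exact absurd h2 (not_le.mpr hk2)
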